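/- arXiv:0903.3024 — 2 statements merged into one kernel-verified Lean document; each statement's English description precedes it below -/
import Mathlib

section
/- Let B ⪰ 0, M ⪰ 0 be n×n real positive semidefinite matrices and N ≻ 0 positive definite, μ > 0, and define Ñ = (N^{-1} + μ^{-1} M)^{-1}. If B M = 0, then det((B + Ñ) Ñ^{-1}) = det((B + N) N^{-1}). -/
theorem enhancement_det_ratio {n : ℕ} (B M N : Matrix (Fin n) (Fin n) ℝ) (μ : ℝ)
    (hB : B.PosSemidef) (hM : M.PosSemidef) (hN : N.PosDef) (hμ : 0 < μ)
    (hBM : B * M = 0) :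
    ((B + (N⁻¹ + μ⁻¹ • M)⁻¹) * ((N⁻¹ + μ⁻¹ • M)⁻¹)⁻¹).det = ((B + N) * N⁻¹).det := by
  set S := N⁻¹ + μ⁻¹ • M with hS
  have hsm : (μ⁻¹ • M).PosSemidef := by
    refine ⟨?_, fun x => ?_⟩
    · show (μ⁻¹ • M).conjTranspose = _
      rw [Matrix.conjTranspose_smul, star_trivial, hM.1]
    have key : ∀ a b c : ℝ, a * (μ⁻¹ * b) * c = μ⁻¹ * (a * b * c) := fun _ _ _ => by ring
    simpa [key, Finsupp.mul_sum] using
      smul_nonneg (by positivity : (0:ℝ) ≤ μ⁻¹) (hM.2 x)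
  have hSpd : S.PosDef := (hN.inv).add_posSemidef hsm
  have hSinv : IsUnit S.det := hSpd.det_pos.ne'.isUnit
  have hNinv : IsUnit N.det := hN.det_pos.ne'.isUnit
  have h1 : (S⁻¹)⁻¹ = S := Matrix.nonsing_inv_nonsing_inv S hSinv
  have h2 : (B + S⁻¹) * S = B * N⁻¹ + 1 := by
    rw [add_mul, Matrix.nonsing_inv_mul S hSinv, hS, mul_add, Matrix.mul_smul, hBM,
      smul_zero, add_zero]
  have h3 : (B + N) * N⁻¹ = B * N⁻¹ + 1 := by
    rw [add_mul, Matrix.mul_nonsing_inv N hNinv]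
  rw [h1, h2, h3]
end

section
/- Let S ⪰ B ⪰ 0 and N₀ ≻ 0 be n×n real symmetric matrices, M ⪰ 0 positive semidefinite with (S − B) M = 0, and define Ñ₀ by (B + Ñ₀)^{-1} = (B + N₀)^{-1} + M (assuming the right side is invertible with inverse exceeding B so that Ñ₀ ≻ 0). Then det((S + Ñ₀)(B + Ñ₀)^{-1}) = det((S + N₀)(B + N₀)^{-1}). -/
theorem enhancement_det_ratio_S {n : ℕ} (S B N₀ M Nt : Matrix (Fin n) (Fin n) ℝ)
    (hS : S.IsSymm) (hBsymm : B.IsSymm)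
    (hSB : (S - B).PosSemidef) (hB : B.PosSemidef)
    (hN₀ : N₀.PosDef) (hM : M.PosSemidef)
    (hslack : (S - B) * M = 0)
    (hNt : Nt.PosDef)
    (hdef : (B + Nt)⁻¹ = (B + N₀)⁻¹ + M) :
    ((S + Nt) * (B + Nt)⁻¹).det = ((S + N₀) * (B + N₀)⁻¹).det := by
  have hBNt : (B + Nt).PosDef := (by rw [add_comm]; exact hNt.add_posSemidef hB)
  have hBN₀ : (B + N₀).PosDef := (by rw [add_comm]; exact hN₀.add_posSemidef hB)
  have hinvNt : (B + Nt) * (B + Nt)⁻¹ = 1 :=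
    Matrix.mul_nonsing_inv _ (isUnit_iff_ne_zero.mpr hBNt.det_pos.ne')
  have hinvN₀ : (B + N₀) * (B + N₀)⁻¹ = 1 :=
    Matrix.mul_nonsing_inv _ (isUnit_iff_ne_zero.mpr hBN₀.det_pos.ne')
  have key : (S + Nt) * (B + Nt)⁻¹ = (S + N₀) * (B + N₀)⁻¹ := by
    have e1 : S + Nt = (S - B) + (B + Nt) := by abel
    have e2 : S + N₀ = (S - B) + (B + N₀) := by abel
    rw [e1, e2, Matrix.add_mul (S - B) (B + Nt), Matrix.add_mul (S - B) (B + N₀), hinvNt, hinvN₀, hdef, Matrix.mul_add, hslack,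
      add_zero]
  rw [key]
end
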